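/- arXiv:0905.0409 — 7 statements merged into one kernel-verified Lean document; each statement's English description precedes it below -/
import Mathlib

section
/- Let G be a finite abelian group that can be generated by two elements, and let P₁, P₂, P₃ ∈ G. Then there exists a 3×3 integer matrix M with trace zero such that for each i ∈ {1,2,3} one has Pᵢ = Mᵢ₁·P₁ + Mᵢ₂·P₂ + Mᵢ₃·P₃ (where n·P denotes the n-fold sum of P in G). -/
def nsmulHom (q : ℕ) (A : Type*) [AddCommGroup A] : A →+ A :=
  AddMonoidHom.mk' (fun x => q • x) (fun x y => smul_add q x y)

lemma nsmulHom_apply (q : ℕ) (A : Type*) [AddCommGroup A] (x : A) : nsmulHom q A x = q • x := rfl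

lemma card_coker_eq_card_ker (A : Type*) [AddCommGroup A] [Finite A] (f : A →+ A) :
    Nat.card (A ⧸ f.range) = Nat.card f.ker := by
  have h1 := AddSubgroup.card_eq_card_quotient_mul_card_addSubgroup f.range
  have h2 := AddSubgroup.card_eq_card_quotient_mul_card_addSubgroup f.ker
  have h3 : Nat.card (A ⧸ f.ker) = Nat.card f.range :=
    Nat.card_congr (QuotientAddGroup.quotientKerEquivRange f).toEquiv
  have hr : 0 < Nat.card f.range := Nat.card_pos
  rw [h3] at h2
  rw [h2] at h1
  exact (Nat.eq_of_mul_eq_mul_left hr (by linarith [h1])).symm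

lemma counting (G : Type*) [AddCommGroup G] [Fintype G] (g h : G)
    (hgh : ∀ x : G, ∃ a b : ℤ, x = a • g + b • h)
    (F : (Fin 3 → ℤ) →ₗ[ℤ] G) (p : ℤ) (hp : Prime p)
    (hdvd : ∀ k : Fin 3 → ℤ, F k = 0 → ∀ i, p ∣ k i) : False := by
  classical
  set q := p.natAbs with hqdef
  have hqp : Nat.Prime q := Int.prime_iff_natAbs_prime.mp hp
  have hq2 : 2 ≤ q := hqp.two_le
  haveI : NeZero q := ⟨by omega⟩
  have hpq : ∀ x : ℤ, p ∣ x ↔ (q : ℤ) ∣ x := fun x => Int.natAbs_dvd.symm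
  set A' := LinearMap.range F with hA'
  haveI : Finite ↥A' := Subtype.finite
  set f' : ↥A' →+ ↥A' := nsmulHom q ↥A' with hf'
  set fG : G →+ G := nsmulHom q G with hfG
  -- Step E : card (G ⧸ fG.range) ≤ q * q
  have stepE : Nat.card (G ⧸ fG.range) ≤ q * q := by
    have hsurj : Function.Surjective
        (fun c : ZMod q × ZMod q =>
          (QuotientAddGroup.mk ((c.1.val : ℤ) • g + (c.2.val : ℤ) • h) : G ⧸ fG.range)) := by
      intro t
      induction t using QuotientAddGroup.induction_on with
      | H x =>
        obtain ⟨a, b, rfl⟩ := hgh x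
        refine ⟨((a : ZMod q), (b : ZMod q)), ?_⟩
        rw [QuotientAddGroup.eq]
        have ha : (q : ℤ) ∣ a - (((a : ZMod q).val : ℤ)) := by
          have : ((a - (((a : ZMod q).val : ℤ)) : ℤ) : ZMod q) = 0 := by
            push_cast
            rw [ZMod.natCast_val]
            simp [ZMod.intCast_cast]
          exact (ZMod.intCast_zmod_eq_zero_iff_dvd _ q).mp this
        have hb : (q : ℤ) ∣ b - (((b : ZMod q).val : ℤ)) := by
          have : ((b - (((b : ZMod q).val : ℤ)) : ℤ) : ZMod q) = 0 := by
            push_cast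
            rw [ZMod.natCast_val]
            simp [ZMod.intCast_cast]
          exact (ZMod.intCast_zmod_eq_zero_iff_dvd _ q).mp this
        obtain ⟨s, hs⟩ := ha
        obtain ⟨t, ht⟩ := hb
        refine ⟨s • g + t • h, ?_⟩
        show q • (s • g + t • h) = _
        rw [← natCast_zsmul]
        rw [smul_add, smul_smul, smul_smul, ← hs, ← ht, sub_smul, sub_smul]
        abel
    calc Nat.card (G ⧸ fG.range) ≤ Nat.card (ZMod q × ZMod q) :=
          Nat.card_le_card_of_surjective _ hsurj
      _ = q * q := by simp [Nat.card_prod, Nat.card_zmod]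
  -- Step A : q^3 ≤ card (A' ⧸ f'.range)
  have stepA : q ^ 3 ≤ Nat.card (↥A' ⧸ f'.range) := by
    have hinj : Function.Injective
        (fun c : Fin 3 → ZMod q =>
          (QuotientAddGroup.mk (⟨F (fun i => ((c i).val : ℤ)), LinearMap.mem_range_self F _⟩ : ↥A')
            : ↥A' ⧸ f'.range)) := by
      intro c c' hcc
      simp only at hcc
      rw [QuotientAddGroup.eq] at hcc
      obtain ⟨z, hz⟩ := hcc
      obtain ⟨d, hd⟩ := z.2
      have hz' : q • (z : G) = (-(F fun i => ((c i).val : ℤ)) + F fun i => ((c' i).val : ℤ)) := by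
        have := congrArg (Subtype.val) hz
        simpa [hf', nsmulHom_apply] using this
      have hker : F (fun i => ((c' i).val : ℤ) - ((c i).val : ℤ) - (q : ℤ) * d i) = 0 := by
        have hveq : (fun i => ((c' i).val : ℤ) - ((c i).val : ℤ) - (q : ℤ) * d i)
            = (fun i => ((c' i).val : ℤ)) - (fun i => ((c i).val : ℤ)) - (q : ℤ) • d := by
          funext i
          simp [Pi.sub_apply, Pi.smul_apply, smul_eq_mul, mul_comm]
        rw [hveq, F.map_sub, F.map_sub, F.map_smul, hd]
        have hns : (q : ℤ) • (z : G) = q • (z : G) := natCast_zsmul _ _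
        rw [hns, hz']
        abel
      have key : ∀ i, (q : ℤ) ∣ ((c' i).val : ℤ) - ((c i).val : ℤ) := by
        intro i
        have h1 := (hpq _).mp (hdvd _ hker i)
        have h2 : (q:ℤ) ∣ (q : ℤ) * d i := Dvd.intro _ rfl
        have h3 : ((c' i).val : ℤ) - ((c i).val : ℤ)
            = (((c' i).val : ℤ) - ((c i).val : ℤ) - (q:ℤ) * d i) + (q:ℤ) * d i := by ring
        rw [h3]
        exact dvd_add h1 h2
      funext i
      have hlt1 := ZMod.val_lt (c i)
      have hlt2 := ZMod.val_lt (c' i)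
      have h0 : ((c' i).val : ℤ) - ((c i).val : ℤ) = 0 :=
        Int.eq_zero_of_abs_lt_dvd (key i) (by rw [abs_lt]; omega)
      have hveq : (c i).val = (c' i).val := by omega
      have e1 : (((c i).val : ℕ) : ZMod q) = c i := ZMod.natCast_rightInverse (c i)
      have e2 : (((c' i).val : ℕ) : ZMod q) = c' i := ZMod.natCast_rightInverse (c' i)
      rw [← e1, ← e2, hveq]
    calc (q:ℕ) ^ 3 = Nat.card (Fin 3 → ZMod q) := by
          simp [Nat.card_fun, Nat.card_zmod]
      _ ≤ Nat.card (↥A' ⧸ f'.range) := Nat.card_le_card_of_injective _ hinj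
  -- Step C : card f'.ker ≤ card fG.ker
  have stepC : Nat.card f'.ker ≤ Nat.card fG.ker := by
    have hinj : Function.Injective
        (fun x : f'.ker => (⟨((x : ↥A') : G) , by
          have hx := x.2
          rw [AddMonoidHom.mem_ker] at hx
          have hx3 : f' (x : ↥A') = q • ((x : ↥A')) := rfl
          rw [hx3] at hx
          have hx2 : q • (((x : ↥A') : G)) = 0 := by
            have h2 := congrArg Subtype.val hx
            push_cast at h2
            exact_mod_cast h2
          exact AddMonoidHom.mem_ker.mpr hx2⟩ : fG.ker)) := by
      intro a b hab
      simp only [Subtype.mk.injEq] at hab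
      exact Subtype.ext (Subtype.ext hab)
    exact Nat.card_le_card_of_injective _ hinj
  have e1 := card_coker_eq_card_ker ↥A' f'
  have e2 := card_coker_eq_card_ker G fG
  have : (q:ℕ)^3 ≤ q * q := by
    calc (q:ℕ)^3 ≤ Nat.card (↥A' ⧸ f'.range) := stepA
      _ = Nat.card f'.ker := e1
      _ ≤ Nat.card fG.ker := stepC
      _ = Nat.card (G ⧸ fG.range) := e2.symm
      _ ≤ q * q := stepE
  nlinarith


lemma exists_prime_dvd_of_ne_top (I : Submodule ℤ ℤ) (hne : I ≠ ⊤) : ∃ p : ℤ, Prime p ∧ ∀ x ∈ I, p ∣ x := by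
  have hpr : Submodule.IsPrincipal I := inferInstance
  set d := Submodule.IsPrincipal.generator I with hd
  have hspan : Ideal.span {d} = I := Ideal.span_singleton_generator I
  have hdu : ¬ IsUnit d := by
    intro hu
    exact hne (by rw [← hspan, Ideal.span_singleton_eq_top.mpr hu])
  have hna : d.natAbs ≠ 1 := fun hh => hdu (Int.isUnit_iff_natAbs_eq.mpr hh)
  obtain ⟨p, hp, hpd⟩ := Int.exists_prime_and_dvd hna
  refine ⟨p, hp, fun x hx => ?_⟩
  rw [← hspan] at hx
  obtain ⟨a, ha⟩ := Ideal.mem_span_singleton'.mp hx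
  exact dvd_trans hpd ⟨a, by rw [← ha]; ring⟩

/-- If `G` is a finite abelian group generated by two elements and
`P : Fin 3 → G`, then there is a trace-zero integer matrix `M` with
`P i = ∑ j, M i j • P j` for all `i`. -/
theorem stmt_0 (G : Type*) [AddCommGroup G] [Fintype G]
    (hgen : ∃ g h : G, ∀ x : G, ∃ a b : ℤ, x = a • g + b • h)
    (P : Fin 3 → G) :
    ∃ M : Matrix (Fin 3) (Fin 3) ℤ, Matrix.trace M = 0 ∧
      ∀ i : Fin 3, P i = ∑ j : Fin 3, M i j • P j := by
  classical
  obtain ⟨g, h, hgh⟩ := hgen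
  set F : (Fin 3 → ℤ) →ₗ[ℤ] G :=
    { toFun := fun c => ∑ i, c i • P i
      map_add' := by
        intro x y
        simp [add_smul, Finset.sum_add_distrib]
      map_smul' := by
        intro r x
        simp [mul_smul, Finset.smul_sum] } with hF
  have hFdef : ∀ c : Fin 3 → ℤ, F c = ∑ i, c i • P i := fun c => rfl
  set K := LinearMap.ker F with hK
  set I : Submodule ℤ ℤ :=
    K.map (LinearMap.proj 0) ⊔ K.map (LinearMap.proj 1) ⊔ K.map (LinearMap.proj 2) with hIdef
  have hI : I = ⊤ := by
    by_contra hne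
    -- get a prime dividing everything in I
    obtain ⟨p, hp, hdvdI⟩ := exists_prime_dvd_of_ne_top I hne
    have hdvd : ∀ k ∈ K, ∀ i : Fin 3, p ∣ k i := by
      intro k hk i
      apply hdvdI
      have : k i ∈ K.map (LinearMap.proj i) := ⟨k, hk, rfl⟩
      fin_cases i
      · exact Submodule.mem_sup_left (Submodule.mem_sup_left this)
      · exact Submodule.mem_sup_left (Submodule.mem_sup_right this)
      · exact Submodule.mem_sup_right this
    exact counting G g h hgh F p hp (fun k hk i => hdvd k hk i)
  -- extract three kernel vectors
  rw [hIdef] at hI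
  have h1 : (1 : ℤ) ∈ K.map (LinearMap.proj 0) ⊔ K.map (LinearMap.proj 1) ⊔ K.map (LinearMap.proj 2) := by
    rw [hI]; trivial
  obtain ⟨y, hy, z, hz, hyz⟩ := Submodule.mem_sup.mp h1
  obtain ⟨x, hx, y', hy', hxy⟩ := Submodule.mem_sup.mp hy
  obtain ⟨k0, hk0, hk0e⟩ := hx
  obtain ⟨k1, hk1, hk1e⟩ := hy'
  obtain ⟨k2, hk2, hk2e⟩ := hz
  -- k0 0 + k1 1 + k2 2 = 1
  have hsum : k0 0 + k1 1 + k2 2 = 1 := by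
    simp only [LinearMap.proj_apply] at hk0e hk1e hk2e
    rw [hk0e, hk1e, hk2e, hxy, hyz]
  set kv : Fin 3 → (Fin 3 → ℤ) := ![k0, k1, k2] with hkv
  have hkvK : ∀ i, kv i ∈ K := by
    intro i; fin_cases i <;> simpa [hkv] using ‹_›
  refine ⟨fun i j => (if i = j then 1 else 0) + (-3) * kv i j, ?_, ?_⟩
  · have h0 := hkvK
    simp only [Matrix.trace, Matrix.diag]
    rw [Fin.sum_univ_three]
    simp only [hkv]
    simp [Matrix.cons_val_zero, Matrix.cons_val_one]
    linarith [hsum]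
  · intro i
    have hzero : F (kv i) = 0 := hkvK i
    have : ∑ j : Fin 3, ((if i = j then (1:ℤ) else 0) + (-3) * kv i j) • P j
        = (∑ j : Fin 3, (if i = j then (1:ℤ) else 0) • P j)
          + (∑ j : Fin 3, ((-3) * kv i j) • P j) := by
      rw [← Finset.sum_add_distrib]
      congr 1; ext j; rw [add_smul]
    rw [this]
    have e1 : ∑ j : Fin 3, (if i = j then (1:ℤ) else 0) • P j = P i := by
      simp [ite_smul]
    have e2 : ∑ j : Fin 3, ((-3 : ℤ) * kv i j) • P j = (-3 : ℤ) • F (kv i) := by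
      rw [hFdef, Finset.smul_sum]
      congr 1; ext j; rw [mul_smul]
    rw [e1, e2, hzero, smul_zero, add_zero]
end

section
/- Let G be a finite abelian group such that for every prime number ℓ the ℓ-torsion subgroup G[ℓ] = {g ∈ G : ℓ·g = 0} can be generated by two elements, and let P₁, P₂, P₃ ∈ G. Then there exists a 3×3 integer matrix M with trace zero such that for each i ∈ {1,2,3} one has Pᵢ = Mᵢ₁·P₁ + Mᵢ₂·P₂ + Mᵢ₃·P₃. -/
section Aux

variable {G : Type*} [AddCommGroup G] [Fintype G]

/-- The `p`-torsion of `G` has at most `p^2` elements if it is 2-generated. -/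
lemma aux_card_tors (p : ℕ) (hp : p.Prime) (g h : G) (hg : p • g = 0) (hh : p • h = 0)
    (hgen : ∀ x : G, p • x = 0 → ∃ a b : ℤ, x = a • g + b • h) :
    Nat.card {x : G // p • x = 0} ≤ p * p := by
  haveI : NeZero p := ⟨hp.ne_zero⟩
  have hsurj : Function.Surjective
      (fun ab : ZMod p × ZMod p => (⟨ab.1.val • g + ab.2.val • h, by
        rw [smul_add, smul_comm p ab.1.val g, smul_comm p ab.2.val h, hg, hh,
          smul_zero, smul_zero, add_zero]⟩ : {x : G // p • x = 0})) := by
    rintro ⟨x, hx⟩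
    obtain ⟨a, b, hab⟩ := hgen x hx
    refine ⟨((a : ZMod p), (b : ZMod p)), ?_⟩
    have key : ∀ (c : ℤ) (y : G), p • y = 0 → ((c : ZMod p).val : ℤ) • y = c • y := by
      intro c y hy
      obtain ⟨t, ht⟩ : (p : ℤ) ∣ (c - ((c : ZMod p).val : ℤ)) := by
        rw [← ZMod.intCast_zmod_eq_zero_iff_dvd]
        push_cast
        simp [ZMod.natCast_val, ZMod.cast_id, ZMod.intCast_cast, sub_self]
      have h0 : (c - ((c : ZMod p).val : ℤ)) • y = 0 := by
        rw [ht, mul_comm, mul_smul, natCast_zsmul, hy, smul_zero]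
      have h1 := sub_smul c ((c : ZMod p).val : ℤ) y
      rw [h0] at h1
      exact (sub_eq_zero.mp h1.symm).symm
    ext
    simp only
    rw [hab, ← key a g hg, ← key b h hh, natCast_zsmul, natCast_zsmul]
  calc Nat.card {x : G // p • x = 0} ≤ Nat.card (ZMod p × ZMod p) :=
        Nat.card_le_card_of_surjective _ hsurj
    _ = p * p := by simp [Nat.card_eq_fintype_card]

/-- Key lemma: for every prime `p` there is a relation among the `P i` with some
coefficient not divisible by `p`. -/
lemma aux_key (htors : ∀ ℓ : ℕ, ℓ.Prime →
      ∃ g h : G, ℓ • g = 0 ∧ ℓ • h = 0 ∧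
        ∀ x : G, ℓ • x = 0 → ∃ a b : ℤ, x = a • g + b • h)
    (P : Fin 3 → G) (p : ℕ) (hp : p.Prime) :
    ∃ a : Fin 3 → ℤ, (∑ i, a i • P i = 0) ∧ ∃ i, ¬ ((p : ℤ) ∣ a i) := by
  obtain ⟨g, h, hg, hh, hgen⟩ := htors p hp
  set A : Submodule ℤ G := Submodule.span ℤ (Set.range P) with hA
  let PA : Fin 3 → A := fun i => ⟨P i, Submodule.subset_span ⟨i, rfl⟩⟩
  let f : A →+ A := (smulAddHom ℤ A) (p : ℤ)
  -- the kernel of f injects into the p-torsion of G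
  have hker : Nat.card f.ker ≤ p * p := by
    have hmap : ∀ x : f.ker, p • ((x : A) : G) = 0 := by
      intro x
      have h1 : (p : ℤ) • (x : A) = 0 := AddMonoidHom.mem_ker.mp x.2
      have h3 : (p : ℤ) • ((x : A) : G) = 0 := by
        calc (p : ℤ) • ((x : A) : G) = (((p : ℤ) • (x : A) : A) : G) :=
              (Submodule.coe_smul _ _).symm
          _ = 0 := by rw [h1]; rfl
      rw [← natCast_zsmul]
      exact h3
    have hinj : Function.Injective
        (fun x : f.ker => (⟨((x : A) : G), hmap x⟩ : {y : G // p • y = 0})) := by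
      intro x y hxy
      simp only [Subtype.mk.injEq] at hxy
      exact Subtype.ext (Subtype.ext hxy)
    exact (Nat.card_le_card_of_injective _ hinj).trans
      (aux_card_tors p hp g h hg hh hgen)
  -- the quotient by the range of f has the same cardinality as the kernel
  have hquot : Nat.card (A ⧸ f.range) ≤ p * p := by
    have h1 : Nat.card A = Nat.card (A ⧸ f.range) * Nat.card f.range :=
      AddSubgroup.card_eq_card_quotient_mul_card_addSubgroup _
    have h2 : Nat.card (A ⧸ f.ker) = Nat.card f.range :=
      Nat.card_congr (QuotientAddGroup.quotientKerEquivRange f).toEquiv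
    have h3 : Nat.card A = Nat.card (A ⧸ f.ker) * Nat.card f.ker :=
      AddSubgroup.card_eq_card_quotient_mul_card_addSubgroup _
    have hpos : 0 < Nat.card f.range := Nat.card_pos
    have : Nat.card (A ⧸ f.range) * Nat.card f.range = Nat.card f.ker * Nat.card f.range := by
      rw [← h1, h3, h2]; ring
    rw [Nat.eq_of_mul_eq_mul_right hpos this]
    exact hker
  -- pigeonhole
  haveI : NeZero p := ⟨hp.ne_zero⟩
  have hcard : Nat.card (A ⧸ f.range) < Nat.card (Fin 3 → Fin p) := by
    have : Nat.card (Fin 3 → Fin p) = p ^ 3 := by simp [Nat.card_eq_fintype_card]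
    rw [this]
    calc Nat.card (A ⧸ f.range) ≤ p * p := hquot
      _ < p ^ 3 := by nlinarith [hp.two_le]
  haveI : Fintype (A ⧸ f.range) := Fintype.ofFinite _
  obtain ⟨c, c', hne, heq⟩ := Fintype.exists_ne_map_eq_of_card_lt
    (fun c : Fin 3 → Fin p => (QuotientAddGroup.mk (∑ i, ((c i : ℤ)) • PA i) : A ⧸ f.range))
    (by rw [← Nat.card_eq_fintype_card, ← Nat.card_eq_fintype_card]; exact hcard)
  set d : Fin 3 → ℤ := fun i => (c i : ℤ) - (c' i : ℤ) with hd
  obtain ⟨i₀, hi₀⟩ : ∃ i, d i ≠ 0 := by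
    by_contra hcon
    push_neg at hcon
    apply hne
    funext i
    have := hcon i
    simp only [hd, sub_eq_zero] at this
    exact Fin.ext (by exact_mod_cast this)
  have hi₀p : ¬ ((p : ℤ) ∣ d i₀) := by
    intro hdvd
    have h1 : (c i₀ : ℤ) < p := by exact_mod_cast (c i₀).2
    have h2 : (c' i₀ : ℤ) < p := by exact_mod_cast (c' i₀).2
    have h3 : (0 : ℤ) ≤ (c i₀ : ℤ) := by positivity
    have h4 : (0 : ℤ) ≤ (c' i₀ : ℤ) := by positivity
    have habs : |d i₀| < p := by rw [hd]; rw [abs_sub_lt_iff]; omega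
    have h5 := Int.le_of_dvd (abs_pos.mpr hi₀) ((dvd_abs _ _).mpr hdvd)
    exact absurd habs (not_lt.mpr h5)
  -- the difference lies in the range of f
  have hrange : (∑ i, d i • PA i) ∈ f.range := by
    have : (QuotientAddGroup.mk (∑ i, ((c i : ℤ)) • PA i) : A ⧸ f.range)
        = QuotientAddGroup.mk (∑ i, ((c' i : ℤ)) • PA i) := heq
    rw [QuotientAddGroup.eq] at this
    have h' : (-(∑ i, ((c i : ℤ)) • PA i) + ∑ i, ((c' i : ℤ)) • PA i) ∈ f.range := this
    have h'' : (∑ i, d i • PA i) = -(-(∑ i, ((c i : ℤ)) • PA i) + ∑ i, ((c' i : ℤ)) • PA i) := by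
      simp only [hd, sub_smul, Finset.sum_sub_distrib]
      abel
    rw [h'']
    exact neg_mem h'
  obtain ⟨y, hy⟩ := hrange
  -- express y as a combination of the P i
  obtain ⟨e, he⟩ : ∃ e : Fin 3 → ℤ, ∑ i, e i • P i = (y : G) := by
    have hy' : (y : G) ∈ Submodule.span ℤ (Set.range P) := y.2
    rw [Submodule.mem_span_range_iff_exists_fun] at hy'
    exact hy'
  refine ⟨fun i => d i - (p : ℤ) * e i, ?_, ⟨i₀, ?_⟩⟩
  · have hyG : (p : ℤ) • (y : G) = ∑ i, d i • P i := by
      have : ((f y : A) : G) = ((∑ i, d i • PA i : A) : G) := by rw [hy]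
      rw [show ((f y : A) : G) = (p : ℤ) • ((y : A) : G) from rfl] at this
      rw [this]
      simp [PA]
    calc ∑ i, (d i - (p : ℤ) * e i) • P i
        = ∑ i, d i • P i - (p : ℤ) • ∑ i, e i • P i := by
          simp only [sub_smul, Finset.sum_sub_distrib, Finset.smul_sum, mul_smul]
      _ = 0 := by rw [he, ← hyG]; abel
  · intro hdvd
    apply hi₀p
    have h7 : (p : ℤ) ∣ (p : ℤ) * e i₀ := Dvd.intro _ rfl
    have h8 := dvd_add hdvd h7
    simpa using h8

end Aux

/-- If `G` is a finite abelian group such that for every prime `ℓ` the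
`ℓ`-torsion subgroup is generated by two elements, and `P : Fin 3 → G`, then there is a
trace-zero integer matrix `M` with `P i = ∑ j, M i j • P j` for all `i`. -/
theorem stmt_1 (G : Type*) [AddCommGroup G] [Fintype G]
    (htors : ∀ ℓ : ℕ, ℓ.Prime →
      ∃ g h : G, ℓ • g = 0 ∧ ℓ • h = 0 ∧
        ∀ x : G, ℓ • x = 0 → ∃ a b : ℤ, x = a • g + b • h)
    (P : Fin 3 → G) :
    ∃ M : Matrix (Fin 3) (Fin 3) ℤ, Matrix.trace M = 0 ∧
      ∀ i : Fin 3, P i = ∑ j : Fin 3, M i j • P j := by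
  classical
  set Rel : (Fin 3 → ℤ) → Prop := fun a => ∑ i, a i • P i = 0 with hRel
  have hRel0 : Rel 0 := by simp [hRel]
  have hReladd : ∀ {a b}, Rel a → Rel b → Rel (a + b) := by
    intro a b ha hb
    simp only [hRel, Pi.add_apply, add_smul, Finset.sum_add_distrib] at *
    rw [ha, hb, add_zero]
  have hRelneg : ∀ {a}, Rel a → Rel (-a) := by
    intro a ha
    simp only [hRel, Pi.neg_apply, neg_smul, Finset.sum_neg_distrib] at *
    rw [ha, neg_zero]
  set T : AddSubgroup ℤ :=
    { carrier := {x | ∃ a b c : Fin 3 → ℤ, Rel a ∧ Rel b ∧ Rel c ∧ a 0 + b 1 + c 2 = x}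
      zero_mem' := ⟨0, 0, 0, hRel0, hRel0, hRel0, by simp⟩
      add_mem' := by
        rintro x y ⟨a, b, c, ha, hb, hc, hx⟩ ⟨a', b', c', ha', hb', hc', hy⟩
        exact ⟨a + a', b + b', c + c', hReladd ha ha', hReladd hb hb', hReladd hc hc', by
          simp only [Pi.add_apply]; omega⟩
      neg_mem' := by
        rintro x ⟨a, b, c, ha, hb, hc, hx⟩
        exact ⟨-a, -b, -c, hRelneg ha, hRelneg hb, hRelneg hc, by
          simp only [Pi.neg_apply]; omega⟩ } with hT
  -- every coordinate of every relation lies in T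
  have hcoordT : ∀ (a : Fin 3 → ℤ), Rel a → ∀ i, a i ∈ T := by
    intro a ha i
    fin_cases i
    · exact ⟨a, 0, 0, ha, hRel0, hRel0, by simp⟩
    · exact ⟨0, a, 0, hRel0, ha, hRel0, by simp⟩
    · exact ⟨0, 0, a, hRel0, hRel0, ha, by simp⟩
  -- T contains the nonzero integer card G
  have hcardG : ((Fintype.card G : ℤ)) ∈ T := by
    have hrel : Rel (fun i => if i = 0 then (Fintype.card G : ℤ) else 0) := by
      simp only [hRel]
      rw [Fin.sum_univ_three]
      simp [card_nsmul_eq_zero]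
    have := hcoordT _ hrel 0
    simpa using this
  -- T = ⊤
  have hTtop : ∀ x : ℤ, x ∈ T := by
    obtain ⟨k, hk⟩ := Int.subgroup_cyclic T
    have hkdvd : ∀ x ∈ T, k ∣ x := by
      intro x hx
      rw [hk, AddSubgroup.mem_closure_singleton] at hx
      obtain ⟨n, hn⟩ := hx
      exact ⟨n, by rw [← hn, smul_eq_mul]; ring⟩
    have hk0 : k ≠ 0 := by
      intro h0
      have := hkdvd _ hcardG
      rw [h0] at this
      simp only [zero_dvd_iff] at this
      have := Fintype.card_pos (α := G)
      omega
    have hk1 : k.natAbs = 1 := by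
      by_contra hne
      obtain ⟨p, hp, hpk⟩ := Nat.exists_prime_and_dvd hne
      obtain ⟨a, hrel, i, hi⟩ := aux_key htors P p hp
      apply hi
      have h6 : (p : ℤ) ∣ k := Int.natCast_dvd.mpr hpk
      exact h6.trans (hkdvd _ (hcoordT a hrel i))
    intro x
    rw [hk, AddSubgroup.mem_closure_singleton]
    rcases Int.natAbs_eq_iff.mp hk1 with h | h
    · exact ⟨x, by rw [h, smul_eq_mul]; push_cast; ring⟩
    · exact ⟨-x, by rw [h, smul_eq_mul]; push_cast; ring⟩
  obtain ⟨a, b, c, ha, hb, hc, habc⟩ := hTtop (-3)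
  refine ⟨1 + Matrix.of ![a, b, c], ?_, ?_⟩
  · rw [Matrix.trace_add, Matrix.trace_one]
    have : Matrix.trace (Matrix.of ![a, b, c]) = a 0 + b 1 + c 2 := by
      simp [Matrix.trace, Matrix.diag, Fin.sum_univ_three]
    rw [this, habc]
    norm_num
  · intro i
    have hone : ∑ j, ((1 : Matrix (Fin 3) (Fin 3) ℤ) i j) • P j = P i := by
      simp [Matrix.one_apply]
    have hrow : ∑ j, (Matrix.of ![a, b, c]) i j • P j = 0 := by
      fin_cases i
      · simpa [hRel] using ha
      · simpa [hRel] using hb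
      · simpa [hRel] using hc
    calc P i = ∑ j, ((1 : Matrix (Fin 3) (Fin 3) ℤ) i j) • P j
        + ∑ j, (Matrix.of ![a, b, c]) i j • P j := by rw [hone, hrow, add_zero]
      _ = ∑ j : Fin 3, (1 + Matrix.of ![a, b, c]) i j • P j := by
          rw [← Finset.sum_add_distrib]
          congr 1
          funext j
          rw [Matrix.add_apply, add_smul]
end

section
/- Let G be a finite abelian group such that for every prime number ℓ the ℓ-torsion subgroup G[ℓ] = {g ∈ G : ℓ·g = 0} can be generated by two elements, and let P₁, P₂, P₃ ∈ G. Let α₁ be the smallest positive integer such that α₁·P₁ lies in the subgroup of G generated by P₂ and P₃, and define α₂ and α₃ analogously (these exist since G is finite). Then gcd(α₁, α₂, α₃) = 1. -/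
lemma aux_dvd_of_isLeast {G : Type*} [AddCommGroup G] {P : G} {C : AddSubgroup G} {α : ℕ}
    (hα : IsLeast {n : ℕ | 0 < n ∧ n • P ∈ C} α) {m : ℤ} (hm : m • P ∈ C) : (α : ℤ) ∣ m := by
  obtain ⟨⟨hpos, hmem⟩, hlb⟩ := hα
  have hαz : (0:ℤ) < (α:ℤ) := by exact_mod_cast hpos
  have hmemz : (α : ℤ) • P ∈ C := by
    rw [natCast_zsmul]; exact hmem
  have hr : (m % (α:ℤ)) • P ∈ C := by
    have h1 : (m % (α:ℤ)) = m - (α:ℤ) * (m / (α:ℤ)) := by rw [Int.emod_def]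
    rw [h1, sub_smul, mul_comm, mul_smul]
    exact C.sub_mem hm (C.zsmul_mem hmemz _)
  rcases eq_or_ne (m % (α:ℤ)) 0 with h0 | h0
  · exact Int.dvd_of_emod_eq_zero h0
  · exfalso
    have hnn : 0 ≤ m % (α:ℤ) := Int.emod_nonneg m (ne_of_gt hαz)
    have hlt : m % (α:ℤ) < (α:ℤ) := Int.emod_lt_of_pos m hαz
    set r := (m % (α:ℤ)).toNat with hrdef
    have hrz : (r : ℤ) = m % (α:ℤ) := Int.toNat_of_nonneg hnn
    have hrpos : 0 < r := by omega
    have hrP : r • P ∈ C := by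
      rw [← natCast_zsmul, hrz]; exact hr
    have := hlb ⟨hrpos, hrP⟩
    omega

lemma aux_mem_closure_triple {G : Type*} [AddCommGroup G] {P₁ P₂ P₃ x : G} :
    x ∈ AddSubgroup.closure ({P₁, P₂, P₃} : Set G) ↔
      ∃ a b c : ℤ, a • P₁ + b • P₂ + c • P₃ = x := by
  rw [show ({P₁, P₂, P₃} : Set G) = {P₁} ∪ {P₂, P₃} from rfl, AddSubgroup.closure_union,
    AddSubgroup.mem_sup]
  constructor
  · rintro ⟨y, hy, z, hz, rfl⟩
    obtain ⟨a, rfl⟩ := AddSubgroup.mem_closure_singleton.1 hy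
    obtain ⟨b, c, rfl⟩ := AddSubgroup.mem_closure_pair.1 hz
    exact ⟨a, b, c, by abel⟩
  · rintro ⟨a, b, c, rfl⟩
    exact ⟨a • P₁, AddSubgroup.mem_closure_singleton.2 ⟨a, rfl⟩, b • P₂ + c • P₃,
      AddSubgroup.mem_closure_pair.2 ⟨b, c, rfl⟩, by abel⟩

lemma aux_pair_mem {G : Type*} [AddCommGroup G] (P Q : G) (a b : ℤ) :
    a • P + b • Q ∈ AddSubgroup.closure ({P, Q} : Set G) :=
  AddSubgroup.mem_closure_pair.2 ⟨a, b, rfl⟩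

lemma aux_zsmul_eq_val_smul {G : Type*} [AddCommGroup G] {ℓ : ℕ} [NeZero ℓ] {g : G}
    (hg : ℓ • g = 0) (a : ℤ) : a • g = ((a : ZMod ℓ)).val • g := by
  have hdvd : (ℓ : ℤ) ∣ a - (((a : ZMod ℓ)).val : ℤ) := by
    have : ((a - (((a : ZMod ℓ)).val : ℤ) : ℤ) : ZMod ℓ) = 0 := by
      push_cast [ZMod.intCast_cast, ZMod.natCast_val]
      simp
    exact (ZMod.intCast_zmod_eq_zero_iff_dvd _ _).1 this
  obtain ⟨k, hk⟩ := hdvd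
  have h0 : (a - (((a : ZMod ℓ)).val : ℤ)) • g = 0 := by
    rw [hk, mul_comm, mul_smul, show (ℓ:ℤ) • g = 0 by rw [natCast_zsmul, hg], smul_zero]
  have := sub_smul a (((a : ZMod ℓ)).val : ℤ) g
  rw [h0] at this
  have h2 : a • g = (((a : ZMod ℓ)).val : ℤ) • g := by linear_combination (norm := abel) this.symm
  rw [h2, natCast_zsmul]

/-- If every `ℓ`-torsion subgroup of the finite abelian group `G` is generated
by two elements, and `α₁, α₂, α₃` are the minimal positive multipliers sending each `Pᵢ` into
the subgroup generated by the other two points, then `gcd(α₁, α₂, α₃) = 1`. -/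
theorem stmt_2 (G : Type*) [AddCommGroup G] [Fintype G]
    (htors : ∀ ℓ : ℕ, ℓ.Prime →
      ∃ g h : G, ℓ • g = 0 ∧ ℓ • h = 0 ∧
        ∀ x : G, ℓ • x = 0 → ∃ a b : ℤ, x = a • g + b • h)
    (P₁ P₂ P₃ : G) (α₁ α₂ α₃ : ℕ)
    (hα₁ : IsLeast {n : ℕ | 0 < n ∧ n • P₁ ∈ AddSubgroup.closure ({P₂, P₃} : Set G)} α₁)
    (hα₂ : IsLeast {n : ℕ | 0 < n ∧ n • P₂ ∈ AddSubgroup.closure ({P₁, P₃} : Set G)} α₂)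
    (hα₃ : IsLeast {n : ℕ | 0 < n ∧ n • P₃ ∈ AddSubgroup.closure ({P₁, P₂} : Set G)} α₃) :
    Nat.gcd α₁ (Nat.gcd α₂ α₃) = 1 := by
  by_contra hne
  obtain ⟨ℓ, hp, hdvd⟩ := Nat.exists_prime_and_dvd hne
  haveI : Fact ℓ.Prime := ⟨hp⟩
  haveI : NeZero ℓ := ⟨hp.ne_zero⟩
  have hd1 : ℓ ∣ α₁ := hdvd.trans (Nat.gcd_dvd_left _ _)
  have hd2 : ℓ ∣ α₂ := hdvd.trans ((Nat.gcd_dvd_right _ _).trans (Nat.gcd_dvd_left _ _))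
  have hd3 : ℓ ∣ α₃ := hdvd.trans ((Nat.gcd_dvd_right _ _).trans (Nat.gcd_dvd_right _ _))
  obtain ⟨g, h, hg, hh, hgh⟩ := htors ℓ hp
  set H := AddSubgroup.closure ({P₁, P₂, P₃} : Set G) with hHdef
  have hP₁ : P₁ ∈ H := AddSubgroup.subset_closure (by simp)
  have hP₂ : P₂ ∈ H := AddSubgroup.subset_closure (by simp)
  have hP₃ : P₃ ∈ H := AddSubgroup.subset_closure (by simp)
  set p₁ : H := ⟨P₁, hP₁⟩ with hp₁def
  set p₂ : H := ⟨P₂, hP₂⟩ with hp₂def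
  set p₃ : H := ⟨P₃, hP₃⟩ with hp₃def
  set φ : H →+ H := AddMonoidHom.mk' (fun x => (ℓ : ℤ) • x) (fun a b => smul_add _ a b) with hφdef
  -- the quotient H / ℓH
  let Q := H ⧸ φ.range
  -- the torsion subtype
  let T := {x : G // ℓ • x = 0}
  -- injection of (ZMod ℓ)³ into Q
  have hinj : Function.Injective (fun c : ZMod ℓ × ZMod ℓ × ZMod ℓ =>
      (QuotientAddGroup.mk ((c.1.val : ℤ) • p₁ + (c.2.1.val : ℤ) • p₂ + (c.2.2.val : ℤ) • p₃) : Q)) := by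
    rintro ⟨c₁, c₂, c₃⟩ ⟨d₁, d₂, d₃⟩ hcd
    simp only [Prod.mk.injEq]
    have hmem := QuotientAddGroup.eq.1 hcd
    obtain ⟨z, hz⟩ := hmem
    have hzmem : (z : G) ∈ AddSubgroup.closure ({P₁, P₂, P₃} : Set G) := z.2
    obtain ⟨u, v, w, huvw⟩ := aux_mem_closure_triple.1 hzmem
    have hzG : (ℓ : ℤ) • (z : G) =
        -((c₁.val : ℤ) • P₁ + (c₂.val : ℤ) • P₂ + (c₃.val : ℤ) • P₃)
          + ((d₁.val : ℤ) • P₁ + (d₂.val : ℤ) • P₂ + (d₃.val : ℤ) • P₃) := by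
      have := congrArg (Subtype.val) hz
      simpa [hφdef, hp₁def, hp₂def, hp₃def] using this
    rw [← huvw] at hzG
    set m₁ : ℤ := (d₁.val : ℤ) - (c₁.val : ℤ) with hm₁
    set m₂ : ℤ := (d₂.val : ℤ) - (c₂.val : ℤ) with hm₂
    set m₃ : ℤ := (d₃.val : ℤ) - (c₃.val : ℤ) with hm₃
    have h₁ : (m₁ - ℓ * u) • P₁ = ((ℓ:ℤ) * v - m₂) • P₂ + ((ℓ:ℤ) * w - m₃) • P₃ := by
      rw [hm₁, hm₂, hm₃]
      linear_combination (norm := module) -hzG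
    have h₂ : (m₂ - ℓ * v) • P₂ = ((ℓ:ℤ) * u - m₁) • P₁ + ((ℓ:ℤ) * w - m₃) • P₃ := by
      rw [hm₁, hm₂, hm₃]
      linear_combination (norm := module) -hzG
    have h₃ : (m₃ - ℓ * w) • P₃ = ((ℓ:ℤ) * u - m₁) • P₁ + ((ℓ:ℤ) * v - m₂) • P₂ := by
      rw [hm₁, hm₂, hm₃]
      linear_combination (norm := module) -hzG
    have hdvd₁ : (α₁ : ℤ) ∣ m₁ - ℓ * u :=
      aux_dvd_of_isLeast hα₁ (h₁ ▸ aux_pair_mem P₂ P₃ _ _)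
    have hdvd₂ : (α₂ : ℤ) ∣ m₂ - ℓ * v :=
      aux_dvd_of_isLeast hα₂ (h₂ ▸ aux_pair_mem P₁ P₃ _ _)
    have hdvd₃ : (α₃ : ℤ) ∣ m₃ - ℓ * w :=
      aux_dvd_of_isLeast hα₃ (h₃ ▸ aux_pair_mem P₁ P₂ _ _)
    have hl₁ : (ℓ : ℤ) ∣ m₁ := by
      have h' : (ℓ : ℤ) ∣ m₁ - ℓ * u := dvd_trans (Int.natCast_dvd_natCast.2 hd1) hdvd₁
      have h'' := dvd_add h' (Dvd.intro u rfl)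
      simpa using h''
    have hl₂ : (ℓ : ℤ) ∣ m₂ := by
      have h' : (ℓ : ℤ) ∣ m₂ - ℓ * v := dvd_trans (Int.natCast_dvd_natCast.2 hd2) hdvd₂
      have h'' := dvd_add h' (Dvd.intro v rfl)
      simpa using h''
    have hl₃ : (ℓ : ℤ) ∣ m₃ := by
      have h' : (ℓ : ℤ) ∣ m₃ - ℓ * w := dvd_trans (Int.natCast_dvd_natCast.2 hd3) hdvd₃
      have h'' := dvd_add h' (Dvd.intro w rfl)
      simpa using h''
    refine ⟨?_, ?_, ?_⟩
    · have : ((m₁ : ℤ) : ZMod ℓ) = 0 := (ZMod.intCast_zmod_eq_zero_iff_dvd _ _).2 hl₁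
      rw [hm₁] at this
      push_cast [ZMod.natCast_val, ZMod.intCast_cast, ZMod.cast_id] at this
      linear_combination -this
    · have : ((m₂ : ℤ) : ZMod ℓ) = 0 := (ZMod.intCast_zmod_eq_zero_iff_dvd _ _).2 hl₂
      rw [hm₂] at this
      push_cast [ZMod.natCast_val, ZMod.intCast_cast, ZMod.cast_id] at this
      linear_combination -this
    · have : ((m₃ : ℤ) : ZMod ℓ) = 0 := (ZMod.intCast_zmod_eq_zero_iff_dvd _ _).2 hl₃
      rw [hm₃] at this
      push_cast [ZMod.natCast_val, ZMod.intCast_cast, ZMod.cast_id] at this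
      linear_combination -this
  -- injection of ker φ into T
  have hkerinj : Function.Injective (fun z : φ.ker => (⟨(z : H), by
      have hz := z.2
      rw [AddMonoidHom.mem_ker] at hz
      have := congrArg (Subtype.val) hz
      simp only [hφdef, AddMonoidHom.mk'_apply] at this
      push_cast at this
      rw [← natCast_zsmul]
      exact this⟩ : T)) := by
    intro a b hab
    simp only [Subtype.mk.injEq] at hab
    exact Subtype.ext (Subtype.ext hab)
  -- surjection of (ZMod ℓ)² onto T
  have hsurj : Function.Surjective (fun a : ZMod ℓ × ZMod ℓ =>
      (⟨a.1.val • g + a.2.val • h, by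
        rw [smul_add, smul_comm ℓ a.1.val g, smul_comm ℓ a.2.val h, hg, hh, smul_zero,
          smul_zero, add_zero]⟩ : T)) := by
    rintro ⟨x, hx⟩
    obtain ⟨a, b, hab⟩ := hgh x hx
    refine ⟨⟨(a : ZMod ℓ), (b : ZMod ℓ)⟩, ?_⟩
    apply Subtype.ext
    simp only
    rw [hab, aux_zsmul_eq_val_smul hg a, aux_zsmul_eq_val_smul hh b]
  -- cardinality computations
  have hcard1 : Nat.card H = Nat.card Q * Nat.card φ.range :=
    AddSubgroup.card_eq_card_quotient_mul_card_addSubgroup φ.range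
  have hcard2 : Nat.card H = Nat.card (H ⧸ φ.ker) * Nat.card φ.ker :=
    AddSubgroup.card_eq_card_quotient_mul_card_addSubgroup φ.ker
  have hcard3 : Nat.card (H ⧸ φ.ker) = Nat.card φ.range :=
    Nat.card_congr (QuotientAddGroup.quotientKerEquivRange φ).toEquiv
  have hrangepos : 0 < Nat.card φ.range := Nat.card_pos
  have hQker : Nat.card Q = Nat.card φ.ker := by
    rw [hcard2, hcard3] at hcard1
    exact Nat.eq_of_mul_eq_mul_right hrangepos (by linarith [hcard1])
  have hQge : ℓ ^ 3 ≤ Nat.card Q := by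
    have := Nat.card_le_card_of_injective _ hinj
    simpa [Nat.card_prod, Nat.card_zmod, pow_succ, pow_zero, mul_assoc] using this
  have hkerle : Nat.card φ.ker ≤ Nat.card T := Nat.card_le_card_of_injective _ hkerinj
  have hTle : Nat.card T ≤ ℓ ^ 2 := by
    have := Nat.card_le_card_of_surjective _ hsurj
    simpa [Nat.card_prod, Nat.card_zmod, pow_succ, pow_zero] using this
  have hlt : ℓ ^ 2 < ℓ ^ 3 := Nat.pow_lt_pow_right hp.one_lt (by norm_num)
  omega
end

section
/- Let ℓ be a prime number and let G be a finite abelian group whose ℓ-torsion subgroup G[ℓ] = {g ∈ G : ℓ·g = 0} can be generated by two elements. Let P₁, P₂, P₃ ∈ G, let α₁ be the smallest positive integer such that α₁·P₁ lies in the subgroup of G generated by P₂ and P₃, and define α₂ and α₃ analogously. Then ℓ does not divide gcd(α₁, α₂, α₃), i.e. ℓ fails to divide at least one of α₁, α₂, α₃. -/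
private lemma dvd_aux {G : Type*} [AddCommGroup G] {P : G} {K : AddSubgroup G} {α : ℕ}
    (hα : IsLeast {n : ℕ | 0 < n ∧ n • P ∈ K} α) {n : ℤ} (hn : n • P ∈ K) : (α : ℤ) ∣ n := by
  obtain ⟨⟨hpos, hmem⟩, hlb⟩ := hα
  have hmem' : (α : ℤ) • P ∈ K := by rwa [natCast_zsmul]
  have hαZ : (0 : ℤ) < (α : ℤ) := by exact_mod_cast hpos
  set r := n % (α : ℤ) with hr
  have hr0 : 0 ≤ r := Int.emod_nonneg n hαZ.ne'
  have hrlt : r < (α : ℤ) := Int.emod_lt_of_pos n hαZ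
  have hrP : r • P ∈ K := by
    have hdef : r = n - (α : ℤ) * (n / (α : ℤ)) := Int.emod_def n (α : ℤ)
    have : r • P = n • P - (n / (α : ℤ)) • ((α : ℤ) • P) := by
      rw [hdef, sub_smul, smul_smul, mul_comm]
    rw [this]
    exact sub_mem hn (zsmul_mem hmem' _)
  rcases eq_or_ne r 0 with h0 | h0
  · exact Int.dvd_of_emod_eq_zero h0
  · exfalso
    have hrpos : 0 < r := lt_of_le_of_ne hr0 (Ne.symm h0)
    have h1 : 0 < r.toNat := by omega
    have h2 : (r.toNat : ℤ) = r := Int.toNat_of_nonneg hr0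
    have h3 : r.toNat • P ∈ K := by
      have : (r.toNat : ℤ) • P ∈ K := by rw [h2]; exact hrP
      rwa [natCast_zsmul] at this
    have := hlb ⟨h1, h3⟩
    omega

private lemma mem_triple {G : Type*} [AddCommGroup G] {x P₁ P₂ P₃ : G}
    (hx : x ∈ AddSubgroup.closure ({P₁, P₂, P₃} : Set G)) :
    ∃ a b c : ℤ, x = a • P₁ + b • P₂ + c • P₃ := by
  have hs : ({P₁, P₂, P₃} : Set G) = {P₁} ∪ {P₂, P₃} := by
    rfl
  rw [hs, AddSubgroup.closure_union, AddSubgroup.mem_sup] at hx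
  obtain ⟨y, hy, z, hz, rfl⟩ := hx
  rw [AddSubgroup.mem_closure_singleton] at hy
  rw [AddSubgroup.mem_closure_pair] at hz
  obtain ⟨a, rfl⟩ := hy
  obtain ⟨b, c, rfl⟩ := hz
  exact ⟨a, b, c, (add_assoc _ _ _).symm⟩

private lemma torsion_card {G : Type*} [AddCommGroup G] [Fintype G] {ℓ : ℕ} (hℓ : ℓ.Prime)
    {g h : G} (hg : ℓ • g = 0) (hh : ℓ • h = 0)
    (hgen : ∀ x : G, ℓ • x = 0 → ∃ a b : ℤ, x = a • g + b • h) :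
    Nat.card {x : G // ℓ • x = 0} ≤ ℓ ^ 2 := by
  haveI : NeZero ℓ := ⟨hℓ.ne_zero⟩
  have hzero : ∀ (c : ℤ) (u : G), ℓ • u = 0 → (ℓ : ℤ) ∣ c → c • u = 0 := by
    intro c u hu ⟨k, hk⟩
    rw [hk, mul_comm, mul_smul]
    have : (ℓ : ℤ) • u = 0 := by rw [natCast_zsmul, hu]
    rw [this, smul_zero]
  have hsurj : Function.Surjective (fun p : ZMod ℓ × ZMod ℓ =>
      (⟨p.1.val • g + p.2.val • h, by
        rw [smul_add, smul_comm ℓ p.1.val, smul_comm ℓ p.2.val, hg, hh,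
          smul_zero, smul_zero, add_zero]⟩ : {x : G // ℓ • x = 0})) := by
    rintro ⟨x, hx⟩
    obtain ⟨a, b, rfl⟩ := hgen x hx
    refine ⟨((a : ZMod ℓ), (b : ZMod ℓ)), ?_⟩
    have key : ∀ (c : ℤ) (u : G), ℓ • u = 0 → ((c : ZMod ℓ)).val • u = c • u := by
      intro c u hu
      have h1 : ((((c : ZMod ℓ)).val : ℤ) - c) • u = 0 := by
        apply hzero _ _ hu
        rw [← ZMod.intCast_zmod_eq_zero_iff_dvd]
        push_cast
        simp [ZMod.natCast_val, ZMod.cast_id]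
      have h2 : (((c : ZMod ℓ)).val : ℤ) • u = c • u := by
        rw [sub_smul, sub_eq_zero] at h1; exact h1
      rw [← natCast_zsmul, h2]
    simp only [Subtype.mk.injEq]
    rw [key a g hg, key b h hh]
  calc Nat.card {x : G // ℓ • x = 0} ≤ Nat.card (ZMod ℓ × ZMod ℓ) :=
        Nat.card_le_card_of_surjective _ hsurj
    _ = ℓ ^ 2 := by simp [Nat.card_prod, Nat.card_eq_fintype_card, sq]

/-- If the `ℓ`-torsion subgroup of the finite abelian group `G` is generated
by two elements, and `α₁, α₂, α₃` are the minimal positive multipliers sending each `Pᵢ` into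
the subgroup generated by the other two points, then `ℓ` does not divide `gcd(α₁, α₂, α₃)`. -/
theorem stmt_3 (G : Type*) [AddCommGroup G] [Fintype G] (ℓ : ℕ) (hℓ : ℓ.Prime)
    (htors : ∃ g h : G, ℓ • g = 0 ∧ ℓ • h = 0 ∧
        ∀ x : G, ℓ • x = 0 → ∃ a b : ℤ, x = a • g + b • h)
    (P₁ P₂ P₃ : G) (α₁ α₂ α₃ : ℕ)
    (hα₁ : IsLeast {n : ℕ | 0 < n ∧ n • P₁ ∈ AddSubgroup.closure ({P₂, P₃} : Set G)} α₁)
    (hα₂ : IsLeast {n : ℕ | 0 < n ∧ n • P₂ ∈ AddSubgroup.closure ({P₁, P₃} : Set G)} α₂)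
    (hα₃ : IsLeast {n : ℕ | 0 < n ∧ n • P₃ ∈ AddSubgroup.closure ({P₁, P₂} : Set G)} α₃) :
    ¬ ℓ ∣ Nat.gcd α₁ (Nat.gcd α₂ α₃) := by
  intro hdvd
  obtain ⟨g, h, hg, hh, hgen⟩ := htors
  have hd1 : (ℓ : ℤ) ∣ (α₁ : ℤ) :=
    Int.natCast_dvd_natCast.2 (hdvd.trans (Nat.gcd_dvd_left _ _))
  have hd2 : (ℓ : ℤ) ∣ (α₂ : ℤ) :=
    Int.natCast_dvd_natCast.2 (hdvd.trans ((Nat.gcd_dvd_right _ _).trans (Nat.gcd_dvd_left _ _)))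
  have hd3 : (ℓ : ℤ) ∣ (α₃ : ℤ) :=
    Int.natCast_dvd_natCast.2 (hdvd.trans ((Nat.gcd_dvd_right _ _).trans (Nat.gcd_dvd_right _ _)))
  set H := AddSubgroup.closure ({P₁, P₂, P₃} : Set G) with hH
  set φ : G →+ G := smulAddHom ℤ G (ℓ : ℤ) with hφ
  set L := H.map φ with hLdef
  have hLH : L ≤ H := by
    rintro _ ⟨y, hy, rfl⟩
    exact AddSubgroup.zsmul_mem H hy (ℓ : ℤ)
  have hP1 : P₁ ∈ H := AddSubgroup.subset_closure (by simp)
  have hP2 : P₂ ∈ H := AddSubgroup.subset_closure (by simp)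
  have hP3 : P₃ ∈ H := AddSubgroup.subset_closure (by simp)
  -- key: coefficients of elements of L are divisible by ℓ
  have key : ∀ c₁ c₂ c₃ : ℤ, c₁ • P₁ + c₂ • P₂ + c₃ • P₃ ∈ L →
      (ℓ : ℤ) ∣ c₁ ∧ (ℓ : ℤ) ∣ c₂ ∧ (ℓ : ℤ) ∣ c₃ := by
    intro c₁ c₂ c₃ hc
    obtain ⟨y, hy, hyeq⟩ := hc
    obtain ⟨b₁, b₂, b₃, rfl⟩ := mem_triple hy
    have heq : ((ℓ : ℤ) * b₁) • P₁ + ((ℓ : ℤ) * b₂) • P₂ + ((ℓ : ℤ) * b₃) • P₃ =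
        c₁ • P₁ + c₂ • P₂ + c₃ • P₃ := by
      rw [← hyeq, hφ]
      simp only [smulAddHom_apply, smul_add, mul_smul]
    refine ⟨?_, ?_, ?_⟩
    · have h1 : (c₁ - (ℓ : ℤ) * b₁) • P₁ ∈ AddSubgroup.closure ({P₂, P₃} : Set G) := by
        rw [AddSubgroup.mem_closure_pair]
        refine ⟨(ℓ : ℤ) * b₂ - c₂, (ℓ : ℤ) * b₃ - c₃, ?_⟩
        linear_combination (norm := module) heq
      have : (ℓ : ℤ) ∣ c₁ - (ℓ : ℤ) * b₁ := hd1.trans (dvd_aux hα₁ h1)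
      simpa using dvd_add this (dvd_mul_right (ℓ : ℤ) b₁)
    · have h1 : (c₂ - (ℓ : ℤ) * b₂) • P₂ ∈ AddSubgroup.closure ({P₁, P₃} : Set G) := by
        rw [AddSubgroup.mem_closure_pair]
        refine ⟨(ℓ : ℤ) * b₁ - c₁, (ℓ : ℤ) * b₃ - c₃, ?_⟩
        linear_combination (norm := module) heq
      have : (ℓ : ℤ) ∣ c₂ - (ℓ : ℤ) * b₂ := hd2.trans (dvd_aux hα₂ h1)
      simpa using dvd_add this (dvd_mul_right (ℓ : ℤ) b₂)
    · have h1 : (c₃ - (ℓ : ℤ) * b₃) • P₃ ∈ AddSubgroup.closure ({P₁, P₂} : Set G) := by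
        rw [AddSubgroup.mem_closure_pair]
        refine ⟨(ℓ : ℤ) * b₁ - c₁, (ℓ : ℤ) * b₂ - c₂, ?_⟩
        linear_combination (norm := module) heq
      have : (ℓ : ℤ) ∣ c₃ - (ℓ : ℤ) * b₃ := hd3.trans (dvd_aux hα₃ h1)
      simpa using dvd_add this (dvd_mul_right (ℓ : ℤ) b₃)
  -- injection (Fin ℓ)³ × L → H
  have hinj : Function.Injective (fun p : Fin ℓ × Fin ℓ × Fin ℓ × L =>
      (⟨(p.1.1 : ℤ) • P₁ + (p.2.1.1 : ℤ) • P₂ + (p.2.2.1.1 : ℤ) • P₃ + (p.2.2.2 : G),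
        add_mem (add_mem (add_mem (zsmul_mem hP1 _) (zsmul_mem hP2 _)) (zsmul_mem hP3 _))
          (hLH p.2.2.2.2)⟩ : H)) := by
    rintro ⟨a₁, a₂, a₃, s⟩ ⟨a₁', a₂', a₃', s'⟩ hpq
    simp only [Subtype.mk.injEq] at hpq
    have hdiff : ((a₁ : ℤ) - (a₁' : ℤ)) • P₁ + ((a₂ : ℤ) - (a₂' : ℤ)) • P₂ +
        ((a₃ : ℤ) - (a₃' : ℤ)) • P₃ ∈ L := by
      have : ((a₁ : ℤ) - (a₁' : ℤ)) • P₁ + ((a₂ : ℤ) - (a₂' : ℤ)) • P₂ +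
          ((a₃ : ℤ) - (a₃' : ℤ)) • P₃ = (s' : G) - (s : G) := by
        linear_combination (norm := module) hpq
      rw [this]
      exact sub_mem s'.2 s.2
    obtain ⟨k1, k2, k3⟩ := key _ _ _ hdiff
    have e1 : a₁ = a₁' := by
      have := Int.eq_zero_of_abs_lt_dvd k1 (by
        have := a₁.2; have := a₁'.2
        rw [abs_lt]; omega)
      have : (a₁ : ℤ) = (a₁' : ℤ) := by omega
      exact Fin.ext (by exact_mod_cast this)
    have e2 : a₂ = a₂' := by
      have := Int.eq_zero_of_abs_lt_dvd k2 (by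
        have := a₂.2; have := a₂'.2
        rw [abs_lt]; omega)
      have : (a₂ : ℤ) = (a₂' : ℤ) := by omega
      exact Fin.ext (by exact_mod_cast this)
    have e3 : a₃ = a₃' := by
      have := Int.eq_zero_of_abs_lt_dvd k3 (by
        have := a₃.2; have := a₃'.2
        rw [abs_lt]; omega)
      have : (a₃ : ℤ) = (a₃' : ℤ) := by omega
      exact Fin.ext (by exact_mod_cast this)
    subst e1; subst e2; subst e3
    have : (s : G) = (s' : G) := by
      have := hpq
      exact add_left_cancel this
    simp [Subtype.ext this]
  -- cardinality bounds
  set f : H →+ G := φ.comp H.subtype with hf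
  have hrange : f.range = L := by
    rw [hf, AddMonoidHom.range_comp, AddSubgroup.range_subtype]
  have hcard : Nat.card H = Nat.card L * Nat.card f.ker := by
    rw [AddSubgroup.card_eq_card_quotient_mul_card_addSubgroup f.ker]
    congr 1
    rw [← hrange]
    exact Nat.card_congr (QuotientAddGroup.quotientKerEquivRange f).toEquiv
  have hker : Nat.card f.ker ≤ ℓ ^ 2 := by
    have hkinj : Function.Injective (fun x : f.ker => (⟨(x : H), by
        have hx : (ℓ : ℤ) • ((x : H) : G) = 0 := x.2
        rwa [natCast_zsmul] at hx⟩ : {x : G // ℓ • x = 0})) := by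
      rintro ⟨⟨x, hxH⟩, hx⟩ ⟨⟨y, hyH⟩, hy⟩ hxy
      simp only [Subtype.mk.injEq] at hxy ⊢
      exact hxy
    calc Nat.card f.ker ≤ Nat.card {x : G // ℓ • x = 0} := Nat.card_le_card_of_injective _ hkinj
      _ ≤ ℓ ^ 2 := torsion_card hℓ hg hh hgen
  have hbig : ℓ ^ 3 * Nat.card L ≤ Nat.card H := by
    have := Nat.card_le_card_of_injective _ hinj
    simpa [Nat.card_prod, Nat.card_eq_fintype_card, pow_succ, mul_assoc] using this
  have hLpos : 0 < Nat.card L := Nat.card_pos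
  have : ℓ ^ 3 * Nat.card L ≤ Nat.card L * ℓ ^ 2 := by
    calc ℓ ^ 3 * Nat.card L ≤ Nat.card H := hbig
      _ = Nat.card L * Nat.card f.ker := hcard
      _ ≤ Nat.card L * ℓ ^ 2 := Nat.mul_le_mul_left _ hker
  have hle : ℓ ^ 3 ≤ ℓ ^ 2 := by
    rw [mul_comm (ℓ ^ 3)] at this
    exact Nat.le_of_mul_le_mul_left this hLpos
  have h2 := hℓ.two_le
  have : ℓ ^ 2 < ℓ ^ 3 := Nat.pow_lt_pow_right (by omega) (by omega)
  omega
end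

section
/- Let G be a finite abelian group, let P₁, P₂, P₃ ∈ G, and let ℓ be a prime number. Let α₁ be the smallest positive integer such that α₁·P₁ lies in the subgroup of G generated by P₂ and P₃, and define α₂ and α₃ analogously. Then ℓ divides all three of α₁, α₂, α₃ if and only if for every triple of integers (x₁, x₂, x₃) with x₁·P₁ + x₂·P₂ + x₃·P₃ = 0, the prime ℓ divides each of x₁, x₂, x₃. -/
lemma key_dvd {G : Type*} [AddCommGroup G] (P : G) (H : AddSubgroup G) (α : ℕ)
    (h : IsLeast {n : ℕ | 0 < n ∧ n • P ∈ H} α) (x : ℤ) (hx : x • P ∈ H) :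
    (α : ℤ) ∣ x := by
  obtain ⟨⟨hpos, hmem⟩, hlb⟩ := h
  have hα : (0:ℤ) < (α:ℤ) := by exact_mod_cast hpos
  set r := x % (α:ℤ) with hr
  have hr0 : 0 ≤ r := Int.emod_nonneg x (by positivity)
  have hrlt : r < α := Int.emod_lt_of_pos x hα
  have hαP : (α:ℤ) • P ∈ H := by simpa using hmem
  have hrP : r • P ∈ H := by
    have hx' : x = (α:ℤ) * (x / α) + r := (Int.mul_ediv_add_emod x α).symm
    have : ((α:ℤ) * (x / α)) • P ∈ H := by
      rw [mul_comm, mul_smul]; exact AddSubgroup.zsmul_mem H hαP _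
    have := AddSubgroup.sub_mem H hx this
    rwa [show x • P - ((α:ℤ) * (x / α)) • P = r • P by
      rw [← sub_smul]; congr 1; omega] at this
  have hr_eq : r = 0 := by
    by_contra hne
    have hrpos : 0 < r := lt_of_le_of_ne hr0 (Ne.symm hne)
    have hmem' : r.toNat ∈ {n : ℕ | 0 < n ∧ n • P ∈ H} := by
      refine ⟨by omega, ?_⟩
      have : ((r.toNat : ℤ)) • P ∈ H := by rwa [Int.toNat_of_nonneg hr0]
      rwa [natCast_zsmul] at this
    have := hlb hmem'
    omega
  exact Int.dvd_of_emod_eq_zero (hr ▸ hr_eq)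

/-- With `α₁, α₂, α₃` the minimal positive multipliers, the prime `ℓ` divides
all three of them iff `ℓ` divides every coefficient of every integer linear relation among
`P₁, P₂, P₃`. -/
theorem stmt_4 (G : Type*) [AddCommGroup G] [Fintype G]
    (P₁ P₂ P₃ : G) (ℓ : ℕ) (hℓ : ℓ.Prime) (α₁ α₂ α₃ : ℕ)
    (hα₁ : IsLeast {n : ℕ | 0 < n ∧ n • P₁ ∈ AddSubgroup.closure ({P₂, P₃} : Set G)} α₁)
    (hα₂ : IsLeast {n : ℕ | 0 < n ∧ n • P₂ ∈ AddSubgroup.closure ({P₁, P₃} : Set G)} α₂)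
    (hα₃ : IsLeast {n : ℕ | 0 < n ∧ n • P₃ ∈ AddSubgroup.closure ({P₁, P₂} : Set G)} α₃) :
    (ℓ ∣ α₁ ∧ ℓ ∣ α₂ ∧ ℓ ∣ α₃) ↔
      ∀ x₁ x₂ x₃ : ℤ, x₁ • P₁ + x₂ • P₂ + x₃ • P₃ = 0 →
        (ℓ : ℤ) ∣ x₁ ∧ (ℓ : ℤ) ∣ x₂ ∧ (ℓ : ℤ) ∣ x₃ := by
  constructor
  · rintro ⟨h1, h2, h3⟩ x₁ x₂ x₃ hrel
    have hl1 : (ℓ:ℤ) ∣ (α₁:ℤ) := Int.natCast_dvd_natCast.mpr h1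
    have hl2 : (ℓ:ℤ) ∣ (α₂:ℤ) := Int.natCast_dvd_natCast.mpr h2
    have hl3 : (ℓ:ℤ) ∣ (α₃:ℤ) := Int.natCast_dvd_natCast.mpr h3
    have m2 : P₂ ∈ AddSubgroup.closure ({P₂, P₃} : Set G) :=
      AddSubgroup.subset_closure (by simp)
    have m3 : P₃ ∈ AddSubgroup.closure ({P₂, P₃} : Set G) :=
      AddSubgroup.subset_closure (by simp)
    have m1' : P₁ ∈ AddSubgroup.closure ({P₁, P₃} : Set G) :=
      AddSubgroup.subset_closure (by simp)
    have m3' : P₃ ∈ AddSubgroup.closure ({P₁, P₃} : Set G) :=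
      AddSubgroup.subset_closure (by simp)
    have m1'' : P₁ ∈ AddSubgroup.closure ({P₁, P₂} : Set G) :=
      AddSubgroup.subset_closure (by simp)
    have m2'' : P₂ ∈ AddSubgroup.closure ({P₁, P₂} : Set G) :=
      AddSubgroup.subset_closure (by simp)
    refine ⟨hl1.trans (key_dvd P₁ _ α₁ hα₁ x₁ ?_),
            hl2.trans (key_dvd P₂ _ α₂ hα₂ x₂ ?_),
            hl3.trans (key_dvd P₃ _ α₃ hα₃ x₃ ?_)⟩
    · rw [show x₁ • P₁ = -(x₂ • P₂ + x₃ • P₃) from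
        eq_neg_of_add_eq_zero_left (by rw [show x₁ • P₁ + (x₂ • P₂ + x₃ • P₃) =
          x₁ • P₁ + x₂ • P₂ + x₃ • P₃ from by abel]; exact hrel)]
      exact AddSubgroup.neg_mem _ (AddSubgroup.add_mem _
        (AddSubgroup.zsmul_mem _ m2 _) (AddSubgroup.zsmul_mem _ m3 _))
    · rw [show x₂ • P₂ = -(x₁ • P₁ + x₃ • P₃) from
        eq_neg_of_add_eq_zero_left (by rw [show x₂ • P₂ + (x₁ • P₁ + x₃ • P₃) =
          x₁ • P₁ + x₂ • P₂ + x₃ • P₃ from by abel]; exact hrel)]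
      exact AddSubgroup.neg_mem _ (AddSubgroup.add_mem _
        (AddSubgroup.zsmul_mem _ m1' _) (AddSubgroup.zsmul_mem _ m3' _))
    · rw [show x₃ • P₃ = -(x₁ • P₁ + x₂ • P₂) from
        eq_neg_of_add_eq_zero_left (by rw [show x₃ • P₃ + (x₁ • P₁ + x₂ • P₂) =
          x₁ • P₁ + x₂ • P₂ + x₃ • P₃ from by abel]; exact hrel)]
      exact AddSubgroup.neg_mem _ (AddSubgroup.add_mem _
        (AddSubgroup.zsmul_mem _ m1'' _) (AddSubgroup.zsmul_mem _ m2'' _))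
  · intro h
    obtain ⟨⟨_, hm1⟩, _⟩ := hα₁
    obtain ⟨⟨_, hm2⟩, _⟩ := hα₂
    obtain ⟨⟨_, hm3⟩, _⟩ := hα₃
    rw [AddSubgroup.mem_closure_pair] at hm1 hm2 hm3
    obtain ⟨a, b, hab⟩ := hm1
    obtain ⟨c, d, hcd⟩ := hm2
    obtain ⟨e, f, hef⟩ := hm3
    refine ⟨?_, ?_, ?_⟩
    · have := (h (α₁:ℤ) (-a) (-b) (by
        rw [neg_smul, neg_smul, natCast_zsmul, ← hab]; abel)).1
      exact_mod_cast this
    · have := (h (-c) (α₂:ℤ) (-d) (by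
        rw [neg_smul, neg_smul, natCast_zsmul, ← hcd]; abel)).2.1
      exact_mod_cast this
    · have := (h (-e) (-f) (α₃:ℤ) (by
        rw [neg_smul, neg_smul, natCast_zsmul, ← hef]; abel)).2.2
      exact_mod_cast this
end

section
/- Let G be a finite abelian group, let P₁, P₂, P₃ ∈ G, and let ℓ be a prime number. Suppose that every element T of the subgroup generated by P₁, P₂, P₃ satisfying ℓ·T = 0 lies in the subgroup generated by P₂ and P₃. Then there exists a triple of integers (x₁, x₂, x₃) with x₁·P₁ + x₂·P₂ + x₃·P₃ = 0 such that ℓ does not divide at least one of x₁, x₂, x₃. -/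
/-- If every `ℓ`-torsion element of the subgroup generated by `P₁, P₂, P₃`
already lies in the subgroup generated by `P₂, P₃`, then there is an integer linear relation
among `P₁, P₂, P₃` not all of whose coefficients are divisible by `ℓ`. -/
theorem stmt_5 (G : Type*) [AddCommGroup G] [Fintype G]
    (P₁ P₂ P₃ : G) (ℓ : ℕ) (hℓ : ℓ.Prime)
    (hT : ∀ T ∈ AddSubgroup.closure ({P₁, P₂, P₃} : Set G),
      ℓ • T = 0 → T ∈ AddSubgroup.closure ({P₂, P₃} : Set G)) :
    ∃ x₁ x₂ x₃ : ℤ, x₁ • P₁ + x₂ • P₂ + x₃ • P₃ = 0 ∧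
      ¬ ((ℓ : ℤ) ∣ x₁ ∧ (ℓ : ℤ) ∣ x₂ ∧ (ℓ : ℤ) ∣ x₃) := by
  by_contra h
  push_neg at h
  -- every relation is divisible by ℓ in all coordinates
  have hall : ∀ x₁ x₂ x₃ : ℤ, x₁ • P₁ + x₂ • P₂ + x₃ • P₃ = 0 →
      (ℓ : ℤ) ∣ x₁ ∧ (ℓ : ℤ) ∣ x₂ ∧ (ℓ : ℤ) ∣ x₃ := by
    intro x₁ x₂ x₃ hx
    exact h x₁ x₂ x₃ hx
  -- claim: for all k, any relation has ℓ^k ∣ x₁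
  have key : ∀ k : ℕ, ∀ x₁ x₂ x₃ : ℤ, x₁ • P₁ + x₂ • P₂ + x₃ • P₃ = 0 →
      ((ℓ : ℤ))^k ∣ x₁ := by
    intro k
    induction k with
    | zero => intro x₁ x₂ x₃ _; simp
    | succ k ih =>
      intro x₁ x₂ x₃ hx
      obtain ⟨⟨y₁, rfl⟩, ⟨y₂, rfl⟩, ⟨y₃, rfl⟩⟩ := hall x₁ x₂ x₃ hx
      set T : G := y₁ • P₁ + y₂ • P₂ + y₃ • P₃ with hTdef
      have hTmem : T ∈ AddSubgroup.closure ({P₁, P₂, P₃} : Set G) := by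
        have h1 : P₁ ∈ AddSubgroup.closure ({P₁, P₂, P₃} : Set G) :=
          AddSubgroup.subset_closure (by simp)
        have h2 : P₂ ∈ AddSubgroup.closure ({P₁, P₂, P₃} : Set G) :=
          AddSubgroup.subset_closure (by simp)
        have h3 : P₃ ∈ AddSubgroup.closure ({P₁, P₂, P₃} : Set G) :=
          AddSubgroup.subset_closure (by simp)
        exact AddSubgroup.add_mem _ (AddSubgroup.add_mem _ (AddSubgroup.zsmul_mem _ h1 _)
          (AddSubgroup.zsmul_mem _ h2 _)) (AddSubgroup.zsmul_mem _ h3 _)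
      have hℓT : ℓ • T = 0 := by
        have : (ℓ : ℤ) • T = 0 := by
          rw [hTdef, smul_add, smul_add, smul_smul, smul_smul, smul_smul]
          convert hx using 3 <;> ring_nf
        simpa using this
      obtain ⟨a, b, hab⟩ := AddSubgroup.mem_closure_pair.mp (hT T hTmem hℓT)
      have hrel : y₁ • P₁ + (y₂ - a) • P₂ + (y₃ - b) • P₃ = 0 := by
        rw [sub_smul, sub_smul]
        have : T - (a • P₂ + b • P₃) = 0 := by rw [hab]; simp
        rw [hTdef] at this
        rw [← this]; abel
      obtain ⟨c, hc⟩ := ih y₁ (y₂ - a) (y₃ - b) hrel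
      exact ⟨c, by rw [pow_succ]; rw [hc]; ring⟩
  -- apply to the relation (|G|, 0, 0)
  have hcard : ((Fintype.card G : ℤ)) • P₁ + (0:ℤ) • P₂ + (0:ℤ) • P₃ = 0 := by
    simp [card_nsmul_eq_zero]
  have hdvd : ∀ k : ℕ, ((ℓ:ℤ))^k ∣ (Fintype.card G : ℤ) := fun k => key k _ 0 0 hcard
  have hlt : (ℓ:ℤ)^(Fintype.card G) ∣ (Fintype.card G : ℤ) := hdvd _
  have hpos : 0 < Fintype.card G := Fintype.card_pos
  have h2 : (2:ℤ) ≤ (ℓ:ℤ) := by exact_mod_cast hℓ.two_le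
  have := Int.le_of_dvd (by exact_mod_cast hpos) hlt
  have hgt : (Fintype.card G : ℤ) < (ℓ:ℤ)^(Fintype.card G) := by
    calc (Fintype.card G : ℤ) < 2^(Fintype.card G) := by
          exact_mod_cast (Nat.lt_two_pow_self (n := Fintype.card G))
      _ ≤ (ℓ:ℤ)^(Fintype.card G) := pow_le_pow_left₀ (by norm_num) h2 _
  omega
end

section
/- Let A be an abelian group and let P₁, P₂, P₃ ∈ A. Suppose there exist integers α₁, α₂, α₃ and integers m₁₂, m₁₃, m₂₁, m₂₃, m₃₁, m₃₂ such that α₁·P₁ + m₁₂·P₂ + m₁₃·P₃ = 0, m₂₁·P₁ + α₂·P₂ + m₂₃·P₃ = 0, m₃₁·P₁ + m₃₂·P₂ + α₃·P₃ = 0, and gcd(α₁, α₂, α₃) = 1. Then there exists a 3×3 integer matrix M with trace zero such that for each i ∈ {1,2,3} one has Pᵢ = Mᵢ₁·P₁ + Mᵢ₂·P₂ + Mᵢ₃·P₃. -/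
/-- Given three relations with diagonal coefficients `α₁, α₂, α₃` whose gcd is
one, there is a trace-zero integer matrix `M` fixing the column vector `(P₁, P₂, P₃)`. -/
theorem stmt_6 (A : Type*) [AddCommGroup A] (P₁ P₂ P₃ : A)
    (α₁ α₂ α₃ m₁₂ m₁₃ m₂₁ m₂₃ m₃₁ m₃₂ : ℤ)
    (h1 : α₁ • P₁ + m₁₂ • P₂ + m₁₃ • P₃ = 0)
    (h2 : m₂₁ • P₁ + α₂ • P₂ + m₂₃ • P₃ = 0)
    (h3 : m₃₁ • P₁ + m₃₂ • P₂ + α₃ • P₃ = 0)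
    (hgcd : Int.gcd α₁ (Int.gcd α₂ α₃) = 1) :
    ∃ M : Matrix (Fin 3) (Fin 3) ℤ, Matrix.trace M = 0 ∧
      P₁ = M 0 0 • P₁ + M 0 1 • P₂ + M 0 2 • P₃ ∧
      P₂ = M 1 0 • P₁ + M 1 1 • P₂ + M 1 2 • P₃ ∧
      P₃ = M 2 0 • P₁ + M 2 1 • P₂ + M 2 2 • P₃ := by
  -- Bézout coefficients
  set g : ℤ := (Int.gcd α₂ α₃ : ℤ) with hg
  have hb1 : α₁ * Int.gcdA α₁ g + g * Int.gcdB α₁ g = 1 := by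
    have := Int.gcd_eq_gcd_ab α₁ g
    rw [hgcd] at this; omega
  have hb2 : α₂ * Int.gcdA α₂ α₃ + α₃ * Int.gcdB α₂ α₃ = g := by
    have := Int.gcd_eq_gcd_ab α₂ α₃
    omega
  set a₁ : ℤ := 3 * Int.gcdA α₁ g with ha1
  set a₂ : ℤ := 3 * Int.gcdB α₁ g * Int.gcdA α₂ α₃ with ha2
  set a₃ : ℤ := 3 * Int.gcdB α₁ g * Int.gcdB α₂ α₃ with ha3
  have hsum : α₁ * a₁ + α₂ * a₂ + α₃ * a₃ = 3 := by
    have : α₂ * a₂ + α₃ * a₃ = 3 * Int.gcdB α₁ g * g := by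
      rw [ha2, ha3]; linear_combination (3 * Int.gcdB α₁ g) * hb2
    linear_combination 3 * hb1 + this
  refine ⟨!![1 - α₁ * a₁, -(a₁ * m₁₂), -(a₁ * m₁₃);
             -(a₂ * m₂₁), 1 - α₂ * a₂, -(a₂ * m₂₃);
             -(a₃ * m₃₁), -(a₃ * m₃₂), 1 - α₃ * a₃], ?_, ?_, ?_, ?_⟩
  · simp [Matrix.trace, Matrix.diag, Fin.sum_univ_three]
    omega
  · have hz : a₁ • (α₁ • P₁ + m₁₂ • P₂ + m₁₃ • P₃) = 0 := by rw [h1, smul_zero]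
    conv_lhs => rw [show P₁ = P₁ - a₁ • (α₁ • P₁ + m₁₂ • P₂ + m₁₃ • P₃) by rw [hz, sub_zero]]
    simp [Matrix.cons_val_zero, Matrix.cons_val_one]
    module
  · have hz : a₂ • (m₂₁ • P₁ + α₂ • P₂ + m₂₃ • P₃) = 0 := by rw [h2, smul_zero]
    conv_lhs => rw [show P₂ = P₂ - a₂ • (m₂₁ • P₁ + α₂ • P₂ + m₂₃ • P₃) by rw [hz, sub_zero]]
    simp [Matrix.cons_val_zero, Matrix.cons_val_one]
    module
  · have hz : a₃ • (m₃₁ • P₁ + m₃₂ • P₂ + α₃ • P₃) = 0 := by rw [h3, smul_zero]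
    conv_lhs => rw [show P₃ = P₃ - a₃ • (m₃₁ • P₁ + m₃₂ • P₂ + α₃ • P₃) by rw [hz, sub_zero]]
    simp [Matrix.cons_val_zero, Matrix.cons_val_one]
    module
end
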